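/- arXiv:2602.15000 — 5 statements merged into one kernel-verified Lean document; each statement's English description precedes it below -/
import Mathlib

section
/- Suppose the stated subgradient inclusions hold. Then ⟨Aᵀ(u⁺ − u), x^k − x⁺⟩ + (1/γ_k)⟨F_k(x^{k-1}) − F_k(x^k), x^k − x⁺⟩ ≤ γ_{k+1} ‖(1/γ_k)(F_k(x^{k-1}) − F_k(x^k)) + Aᵀ(u⁺ − u)‖². -/
open scoped RealInnerProductSpace
open ContinuousLinearMap

noncomputable section

/-- Lemma 3, first inequality. Under the subgradient
inclusions coming from the optimality conditions of two consecutive ALiA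
`x`-updates, with `F_k(z) = z − γ_k ∇f2(z)`, one has
`⟨Aᵀ(u⁺ − u), x^k − x⁺⟩ + (1/γ_k)⟨F_k(x^{k-1}) − F_k(x^k), x^k − x⁺⟩
  ≤ γ_{k+1} ‖(1/γ_k)(F_k(x^{k-1}) − F_k(x^k)) + Aᵀ(u⁺ − u)‖²`. -/
theorem alia_cross_term_bound {p r : ℕ}
    (f1 f2 : EuclideanSpace ℝ (Fin p) → ℝ)
    (hf1 : ConvexOn ℝ Set.univ f1) (hf2 : Differentiable ℝ f2)
    (A : EuclideanSpace ℝ (Fin p) →L[ℝ] EuclideanSpace ℝ (Fin r))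
    (γk γk1 : ℝ) (hγk : 0 < γk) (hγk1 : 0 < γk1)
    (xm xk xp : EuclideanSpace ℝ (Fin p)) (u up : EuclideanSpace ℝ (Fin r))
    (hsub1 : ∀ w, f1 xk
        + ⟪(1/γk) • ((xm - γk • gradient f2 xm) - xk) - adjoint A u, w - xk⟫ ≤ f1 w)
    (hsub2 : ∀ w, f1 xp
        + ⟪(1/γk1) • ((xk - γk1 • gradient f2 xk) - xp) - adjoint A up, w - xp⟫ ≤ f1 w) :
    ⟪adjoint A (up - u), xk - xp⟫
        + (1/γk) * ⟪(xm - γk • gradient f2 xm) - (xk - γk • gradient f2 xk), xk - xp⟫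
      ≤ γk1 * ‖(1/γk) • ((xm - γk • gradient f2 xm) - (xk - γk • gradient f2 xk))
          + adjoint A (up - u)‖^2 := by
  have hγk' : γk ≠ 0 := ne_of_gt hγk
  have hγk1' : γk1 ≠ 0 := ne_of_gt hγk1
  set g := gradient f2 with hg
  set s1 : EuclideanSpace ℝ (Fin p) :=
    (1/γk) • ((xm - γk • g xm) - xk) - adjoint A u with hs1
  set s2 : EuclideanSpace ℝ (Fin p) :=
    (1/γk1) • ((xk - γk1 • g xk) - xp) - adjoint A up with hs2
  set v : EuclideanSpace ℝ (Fin p) :=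
    (1/γk) • ((xm - γk • g xm) - (xk - γk • g xk)) with hv
  set d : EuclideanSpace ℝ (Fin p) := xk - xp with hd
  set b : EuclideanSpace ℝ (Fin p) := adjoint A (up - u) with hb
  -- monotonicity of the subgradient
  have h1 := hsub1 xp
  have h2 := hsub2 xk
  have hmono : 0 ≤ ⟪s1 - s2, d⟫ := by
    have hsum : ⟪s1, xp - xk⟫ + ⟪s2, xk - xp⟫ ≤ 0 := by linarith
    have hflip : ⟪s1, xp - xk⟫ = - ⟪s1, d⟫ := by
      rw [hd, show xp - xk = -(xk - xp) by abel, inner_neg_right]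
    rw [inner_sub_left]
    have : ⟪s2, xk - xp⟫ = ⟪s2, d⟫ := by rw [hd]
    linarith [hflip ▸ this ▸ hsum]
  -- algebraic identity s1 - s2 = (v + b) - (1/γk1) • d
  have hid : s1 - s2 = (v + b) - (1/γk1) • d := by
    rw [hs1, hs2, hv, hd, hb, map_sub]
    match_scalars <;> field_simp
  have hkey : (1/γk1) * ‖d‖^2 ≤ ⟪v + b, d⟫ := by
    rw [hid, inner_sub_left, real_inner_smul_left, real_inner_self_eq_norm_sq] at hmono
    linarith
  have hCS : ⟪v + b, d⟫ ≤ ‖v + b‖ * ‖d‖ := real_inner_le_norm _ _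
  have hgoal : ⟪v + b, d⟫ ≤ γk1 * ‖v + b‖^2 := by
    have h1' : ‖d‖^2 ≤ γk1 * (‖v + b‖ * ‖d‖) := by
      have := hkey.trans hCS
      calc ‖d‖^2 = γk1 * ((1/γk1) * ‖d‖^2) := by field_simp
        _ ≤ γk1 * (‖v + b‖ * ‖d‖) := by
            exact mul_le_mul_of_nonneg_left this (le_of_lt hγk1)
    nlinarith [norm_nonneg d, norm_nonneg (v + b), sq_nonneg (‖d‖ - γk1 * ‖v + b‖)]
  calc ⟪b, d⟫ + (1/γk) * ⟪(xm - γk • g xm) - (xk - γk • g xk), d⟫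
      = ⟪v + b, d⟫ := by rw [inner_add_left, real_inner_smul_left]; ring
    _ ≤ γk1 * ‖v + b‖^2 := hgoal
end
end

section
/- Suppose the stated subgradient inclusions hold. Then ‖x^k − x⁺‖ ≤ γ_{k+1} ‖(1/γ_k)(F_k(x^{k-1}) − F_k(x^k)) + Aᵀ(u⁺ − u)‖. -/
open scoped RealInnerProductSpace
open ContinuousLinearMap

noncomputable section

/-- Lemma 3, consequence. Under the subgradient inclusions
coming from the optimality conditions of two consecutive ALiA `x`-updates, with
`F_k(z) = z − γ_k ∇f2(z)`, one has
`‖x^k − x⁺‖ ≤ γ_{k+1} ‖(1/γ_k)(F_k(x^{k-1}) − F_k(x^k)) + Aᵀ(u⁺ − u)‖`. -/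
theorem alia_consecutive_iterate_bound {p r : ℕ}
    (f1 f2 : EuclideanSpace ℝ (Fin p) → ℝ)
    (hf1 : ConvexOn ℝ Set.univ f1) (hf2 : Differentiable ℝ f2)
    (A : EuclideanSpace ℝ (Fin p) →L[ℝ] EuclideanSpace ℝ (Fin r))
    (γk γk1 : ℝ) (hγk : 0 < γk) (hγk1 : 0 < γk1)
    (xm xk xp : EuclideanSpace ℝ (Fin p)) (u up : EuclideanSpace ℝ (Fin r))
    (hsub1 : ∀ w, f1 xk
        + ⟪(1/γk) • ((xm - γk • gradient f2 xm) - xk) - adjoint A u, w - xk⟫ ≤ f1 w)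
    (hsub2 : ∀ w, f1 xp
        + ⟪(1/γk1) • ((xk - γk1 • gradient f2 xk) - xp) - adjoint A up, w - xp⟫ ≤ f1 w) :
    ‖xk - xp‖
      ≤ γk1 * ‖(1/γk) • ((xm - γk • gradient f2 xm) - (xk - γk • gradient f2 xk))
          + adjoint A (up - u)‖ := by
  set s1 := (1/γk) • ((xm - γk • gradient f2 xm) - xk) - adjoint A u with hs1
  set s2 := (1/γk1) • ((xk - γk1 • gradient f2 xk) - xp) - adjoint A up with hs2
  set v := (1/γk) • ((xm - γk • gradient f2 xm) - (xk - γk • gradient f2 xk))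
      + adjoint A (up - u) with hv
  set d := xk - xp with hd
  have h1 := hsub1 xp
  have h2 := hsub2 xk
  have hmono : 0 ≤ ⟪s1 - s2, d⟫ := by
    have e1 : xp - xk = -d := by rw [hd]; abel
    rw [inner_sub_left]
    rw [e1, inner_neg_right] at h1
    linarith
  have key : s1 - s2 = v - (1/γk1) • d := by
    rw [hs1, hs2, hv, hd]
    simp only [map_sub]
    match_scalars <;> field_simp
  rw [key, inner_sub_left, real_inner_smul_left, real_inner_self_eq_norm_sq] at hmono
  have hcs : ⟪v, d⟫ ≤ ‖v‖ * ‖d‖ := real_inner_le_norm v d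
  have hsq : ‖d‖ ^ 2 ≤ γk1 * (‖v‖ * ‖d‖) := by
    have h3 : (1/γk1) * ‖d‖ ^ 2 ≤ ‖v‖ * ‖d‖ := by linarith
    calc ‖d‖ ^ 2 = γk1 * ((1/γk1) * ‖d‖ ^ 2) := by field_simp
    _ ≤ γk1 * (‖v‖ * ‖d‖) := by nlinarith
  rcases eq_or_lt_of_le (norm_nonneg d) with h0 | h0
  · rw [← h0]; positivity
  · nlinarith
end
end

section
/- Let f1 : ℝ^p → ℝ be convex, f2 : ℝ^p → ℝ convex and differentiable, A : ℝ^p → ℝ^r linear with adjoint Aᵀ, u ∈ ℝ^r, γ > 0, and let x⁻, x ∈ ℝ^p with x⁻ ≠ x. Suppose x minimizes z ↦ f1(z) + ⟨Aᵀu + ∇f2(x⁻), z⟩ + (1/(2γ))‖z − x⁻‖² over ℝ^p. Then, with f = f1 + f2 and ℓ = ⟨∇f2(x⁻) − ∇f2(x), x⁻ − x⟩/‖x⁻ − x‖², one has 0 ≤ f(x⁻) − f(x) + ⟨Aᵀu, x⁻ − x⟩ − ((1 − ℓγ)/γ)‖x − x⁻‖². -/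
open scoped RealInnerProductSpace
open ContinuousLinearMap

noncomputable section

theorem grad_ineq' {E : Type*} [NormedAddCommGroup E] [InnerProductSpace ℝ E] [CompleteSpace E]
    (f : E → ℝ) (hc : ConvexOn ℝ Set.univ f) (hd : Differentiable ℝ f) (x y : E) :
    ⟪gradient f x, y - x⟫ ≤ f y - f x := by
  rcases eq_or_ne y x with rfl | hxy
  · simp
  · set g : ℝ → ℝ := fun t => f (AffineMap.lineMap x y t) with hg
    have hgc : ConvexOn ℝ Set.univ g := by
      have := hc.comp_affineMap (AffineMap.lineMap x y (k := ℝ))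
      rw [Set.preimage_univ] at this
      exact this
    have hcurve : HasDerivAt (fun t : ℝ => AffineMap.lineMap x y t) (y - x) (0:ℝ) := by
      have h1 : HasDerivAt (fun t : ℝ => x + t • (y - x)) (y - x) (0:ℝ) := by
        simpa using ((hasDerivAt_id (0:ℝ)).smul_const (y - x)).const_add x
      refine h1.congr_of_eventuallyEq (Filter.Eventually.of_forall fun t => ?_)
      simp [AffineMap.lineMap_apply_module']; abel
    have hfd : HasFDerivAt f (InnerProductSpace.toDual ℝ E (gradient f x)) x :=
      (hasGradientAt_iff_hasFDerivAt).mp (hd x).hasGradientAt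
    have hgd : HasDerivAt g ⟪gradient f x, y - x⟫ (0:ℝ) := by
      have hfd0 : HasFDerivAt f (InnerProductSpace.toDual ℝ E (gradient f x))
          (AffineMap.lineMap x y (0:ℝ)) := by simpa using hfd
      have := hfd0.comp_hasDerivAt (0:ℝ) hcurve
      simpa [hg, InnerProductSpace.toDual_apply_apply, Function.comp_def] using this
    have := hgc.le_slope_of_hasDerivAt (Set.mem_univ (0:ℝ)) (Set.mem_univ (1:ℝ))
      one_pos hgd
    simpa [slope, hg] using this


/-- the one-step inequality \eqref{eq:lemA1-4} of the paper.
If `x` minimizes `z ↦ f1(z) + ⟨Aᵀu + ∇f2(x⁻), z⟩ + ‖z − x⁻‖²/(2γ)` (the ALiA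
primal `x`-update), then, with `f = f1 + f2` and
`ℓ = ⟨∇f2(x⁻) − ∇f2(x), x⁻ − x⟩/‖x⁻ − x‖²`, one has
`0 ≤ f(x⁻) − f(x) + ⟨Aᵀu, x⁻ − x⟩ − ((1 − ℓγ)/γ)‖x − x⁻‖²`. -/
theorem alia_one_step_inequality {p r : ℕ}
    (f1 f2 : EuclideanSpace ℝ (Fin p) → ℝ)
    (hf1 : ConvexOn ℝ Set.univ f1)
    (hf2c : ConvexOn ℝ Set.univ f2) (hf2d : Differentiable ℝ f2)
    (A : EuclideanSpace ℝ (Fin p) →L[ℝ] EuclideanSpace ℝ (Fin r))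
    (u : EuclideanSpace ℝ (Fin r)) (γ : ℝ) (hγ : 0 < γ)
    (xm x : EuclideanSpace ℝ (Fin p)) (hne : xm ≠ x)
    (hmin : ∀ z, f1 x + ⟪adjoint A u + gradient f2 xm, x⟫ + ‖x - xm‖^2 / (2*γ)
        ≤ f1 z + ⟪adjoint A u + gradient f2 xm, z⟫ + ‖z - xm‖^2 / (2*γ)) :
    0 ≤ (f1 xm + f2 xm) - (f1 x + f2 x) + ⟪adjoint A u, xm - x⟫
        - ((1 - (⟪gradient f2 xm - gradient f2 x, xm - x⟫ / ‖xm - x‖^2) * γ) / γ)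
          * ‖x - xm‖^2 := by
  set c := adjoint A u + gradient f2 xm with hc
  set N : ℝ := ‖x - xm‖^2 with hN
  set G : ℝ := f1 xm + ⟪c, xm⟫ - f1 x - ⟪c, x⟫ with hG
  have hNpos : 0 < N := by
    rw [hN]
    exact pow_pos (norm_pos_iff.mpr (sub_ne_zero.mpr (Ne.symm hne))) 2
  have hN' : ‖xm - x‖^2 = N := by rw [hN, norm_sub_rev]
  have key : ∀ t : ℝ, 0 < t → t ≤ 1 → (2 - t) * (N / (2*γ)) ≤ G := by
    intro t ht0 ht1
    have hz := hmin (x + t • (xm - x))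
    have heq : (1 - t) • x + t • xm = x + t • (xm - x) := by module
    have hconv : f1 (x + t • (xm - x)) ≤ (1 - t) * f1 x + t * f1 xm := by
      have := hf1.2 (Set.mem_univ x) (Set.mem_univ xm)
        (by linarith : (0:ℝ) ≤ 1 - t) (le_of_lt ht0) (by ring)
      rw [heq] at this
      simpa [smul_eq_mul] using this
    have hinner : ⟪c, x + t • (xm - x)⟫ = ⟪c, x⟫ + t * (⟪c, xm⟫ - ⟪c, x⟫) := by
      rw [inner_add_right, real_inner_smul_right, inner_sub_right]
    have hnorm : ‖x + t • (xm - x) - xm‖^2 = (1 - t)^2 * N := by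
      have h2 : x + t • (xm - x) - xm = (1 - t) • (x - xm) := by module
      rw [h2, norm_smul, mul_pow, hN]
      congr 1
      rw [Real.norm_eq_abs, sq_abs]
    rw [hinner, hnorm, mul_div_assoc] at hz
    have hz' : f1 x + ⟪c, x⟫ + N / (2*γ) ≤ (1-t) * f1 x + t * f1 xm
        + (⟪c, x⟫ + t * (⟪c, xm⟫ - ⟪c, x⟫)) + (1-t)^2 * (N / (2*γ)) :=
      le_trans hz (by linarith [hconv])
    have h3 : t * ((2 - t) * (N / (2*γ))) ≤ t * G := by
      rw [hG]; nlinarith [hz']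
    exact le_of_mul_le_mul_left h3 ht0
  have hkey2 : N / γ ≤ G := by
    have hD : 0 ≤ N / (2*γ) := by positivity
    have hall : ∀ ε > 0, N / γ ≤ G + ε := by
      intro ε hε
      set D := N / (2*γ) with hDdef
      set t := min 1 (ε / (D + 1)) with ht
      have ht0 : 0 < t := lt_min one_pos (by positivity)
      have ht1 : t ≤ 1 := min_le_left _ _
      have h1 := key t ht0 ht1
      have htD : t * D ≤ ε := by
        calc t * D ≤ (ε / (D + 1)) * D :=
              mul_le_mul_of_nonneg_right (min_le_right _ _) hD
          _ ≤ ε := by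
              rw [div_mul_eq_mul_div, div_le_iff₀ (by positivity)]
              nlinarith
      have hNγ : N / γ = 2 * D := by
        rw [hDdef]; field_simp [hγ.ne']
      nlinarith
    exact le_of_forall_pos_le_add hall
  have hgrad : ⟪gradient f2 x, xm - x⟫ ≤ f2 xm - f2 x := grad_ineq' f2 hf2c hf2d x xm
  have hGsplit : G = f1 xm - f1 x + ⟪adjoint A u, xm - x⟫ + ⟪gradient f2 xm, xm - x⟫ := by
    rw [hG, hc]
    simp [inner_add_left, inner_sub_right]
    ring
  have hℓ : (⟪gradient f2 xm - gradient f2 x, xm - x⟫ / ‖xm - x‖^2) * N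
      = ⟪gradient f2 xm, xm - x⟫ - ⟪gradient f2 x, xm - x⟫ := by
    rw [hN', div_mul_cancel₀ _ (ne_of_gt hNpos), inner_sub_left]
  set ℓ : ℝ := ⟪gradient f2 xm - gradient f2 x, xm - x⟫ / ‖xm - x‖^2 with hℓdef
  have hfinal : ((1 - ℓ * γ) / γ) * N = N / γ - ℓ * N := by
    field_simp [hγ.ne']
  rw [hfinal, hℓ]
  rw [hGsplit] at hkey2
  linarith
end
end

section
/- Let f1 : ℝ^p → ℝ be convex, f2 : ℝ^p → ℝ convex and differentiable, A : ℝ^p → ℝ^r linear with adjoint Aᵀ, γ > 0, and F(z) = z − γ∇f2(z). Let x^{k-1}, x^k ∈ ℝ^p and u ∈ ℝ^r, and suppose (1/γ)(F(x^{k-1}) − x^k) − Aᵀu is a subgradient of f1 at x^k. Then for all x⋆, x⁺ ∈ ℝ^p: ⟨∇f2(x^k), x⋆ − x⁺⟩ ≤ f2(x⋆) − f2(x^k) + f1(x⁺) − f1(x^k) + (1/γ)⟨F(x^{k-1}) − F(x^k), x^k − x⁺⟩ + ⟨Aᵀu, x⁺ − x^k⟩. -/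
open scoped RealInnerProductSpace
open ContinuousLinearMap

noncomputable section

/-- First-order condition for a differentiable convex function on a real
inner product space: `f x + ⟪∇f x, y - x⟫ ≤ f y`. -/
lemma convex_gradient_ineq {E : Type*} [NormedAddCommGroup E]
    [InnerProductSpace ℝ E] [CompleteSpace E]
    (f : E → ℝ) (hc : ConvexOn ℝ Set.univ f) (hd : Differentiable ℝ f)
    (x y : E) : f x + ⟪gradient f x, y - x⟫ ≤ f y := by
  set g : ℝ → ℝ := fun t => f (x + t • (y - x)) with hg
  have hline : ∀ t : ℝ, x + t • (y - x) = (1 - t) • x + t • y := by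
    intro t; simp [smul_sub, sub_smul]; abel
  have hderiv : HasDerivAt g ⟪gradient f x, y - x⟫ 0 := by
    have hgrad : HasFDerivAt f ((InnerProductSpace.toDual ℝ E) (gradient f x)) x :=
      (hasGradientAt_iff_hasFDerivAt).mp ((hd x).hasGradientAt)
    have hc' : HasDerivAt (fun t : ℝ => x + t • (y - x)) (y - x) 0 := by
      simpa using ((hasDerivAt_id (0:ℝ)).smul_const (y - x)).const_add x
    have hgrad' : HasFDerivAt f ((InnerProductSpace.toDual ℝ E) (gradient f x))
        ((fun t : ℝ => x + t • (y - x)) 0) := by simpa using hgrad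
    have := hgrad'.comp_hasDerivAt 0 hc'
    rw [InnerProductSpace.toDual_apply_apply] at this
    exact this
  have htend : Filter.Tendsto (slope g 0) (nhdsWithin 0 (Set.Ioi 0))
      (nhds ⟪gradient f x, y - x⟫) :=
    ((hasDerivAt_iff_tendsto_slope).mp hderiv).mono_left
      (nhdsWithin_mono _ (fun t ht => ne_of_gt ht))
  have hev : ∀ᶠ t in nhdsWithin (0:ℝ) (Set.Ioi 0), slope g 0 t ≤ f y - f x := by
    filter_upwards [Ioo_mem_nhdsGT_of_mem (Set.left_mem_Ico.mpr one_pos)] with t ht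
    have ht0 : (0:ℝ) < t := ht.1
    have ht1 : t < 1 := ht.2
    have hcv := hc.2 (Set.mem_univ x) (Set.mem_univ y)
      (by linarith : (0:ℝ) ≤ 1 - t) ht0.le (by ring)
    have hgt : g t ≤ (1 - t) * f x + t * f y := by
      rw [hg]; simp only [hline t]; simpa [smul_eq_mul] using hcv
    have : slope g 0 t = (g t - g 0) / t := by simp [slope_def_field]
    rw [this]
    rw [div_le_iff₀ ht0]
    have hg0 : g 0 = f x := by simp [hg]
    rw [hg0]
    nlinarith
  have hle : ⟪gradient f x, y - x⟫ ≤ f y - f x :=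
    le_of_tendsto htend hev
  linarith

/-- the bound (A1) in the proof of the descent lemma. If
`(1/γ)(F(x^{k-1}) − x^k) − Aᵀu` is a subgradient of `f1` at `x^k`, where
`F(z) = z − γ∇f2(z)`, then for all `x⋆, x⁺`:
`⟨∇f2(x^k), x⋆ − x⁺⟩ ≤ f2(x⋆) − f2(x^k) + f1(x⁺) − f1(x^k)
  + (1/γ)⟨F(x^{k-1}) − F(x^k), x^k − x⁺⟩ + ⟨Aᵀu, x⁺ − x^k⟩`. -/
theorem alia_A1_bound {p r : ℕ}
    (f1 f2 : EuclideanSpace ℝ (Fin p) → ℝ)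
    (hf1 : ConvexOn ℝ Set.univ f1)
    (hf2c : ConvexOn ℝ Set.univ f2) (hf2d : Differentiable ℝ f2)
    (A : EuclideanSpace ℝ (Fin p) →L[ℝ] EuclideanSpace ℝ (Fin r))
    (γ : ℝ) (hγ : 0 < γ)
    (xm xk : EuclideanSpace ℝ (Fin p)) (u : EuclideanSpace ℝ (Fin r))
    (hsub : ∀ w, f1 xk
        + ⟪(1/γ) • ((xm - γ • gradient f2 xm) - xk) - adjoint A u, w - xk⟫ ≤ f1 w) :
    ∀ xs xp : EuclideanSpace ℝ (Fin p),
      ⟪gradient f2 xk, xs - xp⟫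
        ≤ f2 xs - f2 xk + f1 xp - f1 xk
          + (1/γ) * ⟪(xm - γ • gradient f2 xm) - (xk - γ • gradient f2 xk), xk - xp⟫
          + ⟪adjoint A u, xp - xk⟫ := by
  intro xs xp
  have h2 : f2 xk + ⟪gradient f2 xk, xs - xk⟫ ≤ f2 xs :=
    convex_gradient_ineq f2 hf2c hf2d xk xs
  have h1 := hsub xp
  have hkey : ⟪gradient f2 xk, xs - xp⟫
      = ⟪gradient f2 xk, xs - xk⟫
        + ⟪(1/γ) • ((xm - γ • gradient f2 xm) - xk) - adjoint A u, xp - xk⟫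
        + (1/γ) * ⟪(xm - γ • gradient f2 xm) - (xk - γ • gradient f2 xk), xk - xp⟫
        + ⟪adjoint A u, xp - xk⟫ := by
    simp only [inner_sub_left, inner_sub_right, real_inner_smul_left, smul_sub,
      real_inner_smul_right]
    field_simp
    ring
  linarith
end
end

section
/- Let U₁ ≥ 0 and γ > 0 be real numbers, K ≥ 1 an integer, and let γ_1, …, γ_{K+1} and P_0, …, P_K be real numbers with γ_k ≥ γ for k = 1, …, K+1, P_k ≥ 0 for k = 0, …, K, 3γ_k − 2γ_{k+1} ≥ 0 for k = 1, …, K, and 3γ_{K+1}P_K + Σ_{k=1}^{K} (3γ_k − 2γ_{k+1})P_{k-1} ≤ U₁. Then min_{k=0,…,K} P_k ≤ U₁ / (2γ_1 + Σ_{k=1}^{K} γ_k + γ_{K+1}) ≤ U₁ / ((K+3)γ). -/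
/-- the telescoping rate argument behind the `O(1/K)` rate of
ALiA. If `γ_k ≥ γ > 0` for `k = 1,…,K+1`, `P_k ≥ 0` for `k = 0,…,K`,
`3γ_k − 2γ_{k+1} ≥ 0` for `k = 1,…,K`, and
`3γ_{K+1}P_K + Σ_{k=1}^K (3γ_k − 2γ_{k+1})P_{k-1} ≤ U₁`, then
`min_{k=0,…,K} P_k ≤ U₁/(2γ_1 + Σ_{k=1}^K γ_k + γ_{K+1}) ≤ U₁/((K+3)γ)`. -/
theorem alia_telescoping_rate (U1 γ : ℝ) (hU : 0 ≤ U1) (hγ : 0 < γ)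
    (K : ℕ) (hK : 1 ≤ K) (γs P : ℕ → ℝ)
    (hlb : ∀ k, 1 ≤ k → k ≤ K + 1 → γ ≤ γs k)
    (hP : ∀ k, k ≤ K → 0 ≤ P k)
    (hmono : ∀ k, 1 ≤ k → k ≤ K → 0 ≤ 3 * γs k - 2 * γs (k+1))
    (hsum : 3 * γs (K+1) * P K
        + ∑ k ∈ Finset.Icc 1 K, (3 * γs k - 2 * γs (k+1)) * P (k-1) ≤ U1) :
    ((Finset.range (K+1)).inf' (by simp) P)
        ≤ U1 / (2 * γs 1 + (∑ k ∈ Finset.Icc 1 K, γs k) + γs (K+1)) ∧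
    U1 / (2 * γs 1 + (∑ k ∈ Finset.Icc 1 K, γs k) + γs (K+1))
        ≤ U1 / ((K + 3) * γ) := by
  set m := (Finset.range (K+1)).inf' (by simp) P with hm
  set S := ∑ k ∈ Finset.Icc 1 K, γs k with hS
  set D := 2 * γs 1 + S + γs (K+1) with hD
  -- lower bound on S
  have hSlb : (K : ℝ) * γ ≤ S := by
    have : ∑ k ∈ Finset.Icc 1 K, γ ≤ S := by
      apply Finset.sum_le_sum
      intro k hk
      rw [Finset.mem_Icc] at hk
      exact hlb k hk.1 (hk.2.trans (Nat.le_succ K))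
    simpa [Nat.Icc_eq_range', mul_comm] using this
  have hDlb : ((K : ℝ) + 3) * γ ≤ D := by
    have h1 : γ ≤ γs 1 := hlb 1 le_rfl (by omega)
    have h2 : γ ≤ γs (K+1) := hlb (K+1) (by omega) le_rfl
    rw [hD]; nlinarith
  have hDpos : 0 < D := lt_of_lt_of_le (by positivity) hDlb
  -- m ≤ P k for k ≤ K, and 0 ≤ m
  have hmle : ∀ k, k ≤ K → m ≤ P k := fun k hk =>
    Finset.inf'_le P (Finset.mem_range.mpr (by omega))
  have hm0 : 0 ≤ m := by
    obtain ⟨j, hj, hje⟩ := Finset.exists_mem_eq_inf' (by simp : (Finset.range (K+1)).Nonempty) P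
    rw [hm, hje]
    exact hP j (by simpa using Nat.lt_succ_iff.mp (Finset.mem_range.mp hj))
  -- shift identity
  have hshift : ∑ k ∈ Finset.Icc 1 K, γs (k+1) = S - γs 1 + γs (K+1) := by
    have h1 : ∑ k ∈ Finset.Icc 1 K, γs (k+1) = ∑ k ∈ Finset.Icc 2 (K+1), γs k := by
      rw [← Finset.Ico_add_one_right_eq_Icc, ← Finset.Ico_add_one_right_eq_Icc, Finset.sum_Ico_eq_sum_range,
        Finset.sum_Ico_eq_sum_range]
      refine Finset.sum_congr (by congr 1 <;> omega) fun i _ => by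
        congr 1; omega
    have h2 : ∑ k ∈ Finset.Icc 1 (K+1), γs k = γs 1 + ∑ k ∈ Finset.Icc 2 (K+1), γs k := by
      rw [Finset.Icc_eq_cons_Ioc (by omega), Finset.sum_cons, ← Finset.Icc_add_one_left_eq_Ioc (a := 1)]; rfl
    have h3 : ∑ k ∈ Finset.Icc 1 (K+1), γs k = S + γs (K+1) :=
      Finset.sum_Icc_succ_top (by omega) _
    rw [h1]; linarith
  -- coefficient identity
  have hcoef : 3 * γs (K+1) + ∑ k ∈ Finset.Icc 1 K, (3 * γs k - 2 * γs (k+1)) = D := by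
    rw [Finset.sum_sub_distrib, ← Finset.mul_sum, ← Finset.mul_sum, hshift]
    ring
  -- main bound
  have hkey : m * D ≤ U1 := by
    rw [← hcoef, mul_add, Finset.mul_sum]
    refine le_trans (add_le_add ?_ ?_) hsum
    · have := hmle K le_rfl
      nlinarith [hlb (K+1) (by omega) le_rfl]
    · apply Finset.sum_le_sum
      intro k hk
      rw [Finset.mem_Icc] at hk
      rw [mul_comm]
      exact mul_le_mul_of_nonneg_left (hmle (k-1) (by omega)) (hmono k hk.1 hk.2)
  constructor
  · rw [le_div_iff₀ hDpos]; exact hkey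
  · apply div_le_div_of_nonneg_left hU (by positivity) hDlb
end
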